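/- Let D be a 4×4 complex matrix (entries D_{ij}, 0-based indexing, row i and column j). The linear map x ↦ D·x on ℂ⁴ is a derivation of the 4-dimensional Mock-Lie algebra A_{1,2} ⊕ A_{1,2} if and only if D_{01} = D_{02} = D_{03} = 0, D_{13} = 0, D_{20} = 0, D_{21} = 0, D_{23} = 0, D_{31} = 0, D_{11} = 2·D_{00}, and D_{33} = 2·D_{22}. Equivalently, the derivations are exactly the linear maps whose matrix relative to the basis (e_1, e_2, e_3, e_4) has the form [[d_{11}, 0, 0, 0], [d_{21}, 2d_{11}, d_{23}, 0], [0, 0, d_{33}, 0], [d_{41}, 0, d_{43}, 2d_{33}]]. -/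
import Mathlib


/-- The product of the 4-dimensional Mock-Lie algebra `A_{1,2} ⊕ A_{1,2}`:
`e_1 · e_1 = e_2`, `e_3 · e_3 = e_4`, all other products of basis vectors zero. -/
def mulA12A12 (x y : Fin 4 → ℂ) : Fin 4 → ℂ := ![0, x 0 * y 0, 0, x 2 * y 2]

/-- `x ↦ D · x` is a derivation of `A_{1,2} ⊕ A_{1,2}` iff
`D 0 1 = D 0 2 = D 0 3 = 0`, `D 1 3 = 0`, `D 2 0 = 0`, `D 2 1 = 0`, `D 2 3 = 0`,
`D 3 1 = 0`, `D 1 1 = 2 * D 0 0` and `D 3 3 = 2 * D 2 2`. -/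
theorem derivation_A12_A12_iff (D : Matrix (Fin 4) (Fin 4) ℂ) :
    (∀ x y : Fin 4 → ℂ,
        D.mulVec (mulA12A12 x y) = mulA12A12 (D.mulVec x) y + mulA12A12 x (D.mulVec y)) ↔
      (D 0 1 = 0 ∧ D 0 2 = 0 ∧ D 0 3 = 0 ∧ D 1 3 = 0 ∧ D 2 0 = 0 ∧ D 2 1 = 0 ∧
        D 2 3 = 0 ∧ D 3 1 = 0 ∧ D 1 1 = 2 * D 0 0 ∧ D 3 3 = 2 * D 2 2) := by
  constructor
  · intro h
    have h1 := h ![1,0,0,0] ![1,0,0,0]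
    have h2 := h ![0,0,1,0] ![0,0,1,0]
    have h3 := h ![1,0,0,0] ![0,0,1,0]
    refine ⟨?_, ?_, ?_, ?_, ?_, ?_, ?_, ?_, ?_, ?_⟩
    · have e := congrFun h1 0
      simp [mulA12A12, Matrix.mulVec, dotProduct, Fin.sum_univ_four] at e
      first | linear_combination e | (rw [← e]; try ring)
    · have e := congrFun h3 1
      simp [mulA12A12, Matrix.mulVec, dotProduct, Fin.sum_univ_four] at e
      first | linear_combination e | (rw [← e]; try ring)
    · have e := congrFun h2 0
      simp [mulA12A12, Matrix.mulVec, dotProduct, Fin.sum_univ_four] at e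
      first | linear_combination e | (rw [← e]; try ring)
    · have e := congrFun h2 1
      simp [mulA12A12, Matrix.mulVec, dotProduct, Fin.sum_univ_four] at e
      first | linear_combination e | (rw [← e]; try ring)
    · have e := congrFun h3 3
      simp [mulA12A12, Matrix.mulVec, dotProduct, Fin.sum_univ_four] at e
      first | linear_combination e | (rw [← e]; try ring)
    · have e := congrFun h1 2
      simp [mulA12A12, Matrix.mulVec, dotProduct, Fin.sum_univ_four] at e
      first | linear_combination e | (rw [← e]; try ring)
    · have e := congrFun h2 2
      simp [mulA12A12, Matrix.mulVec, dotProduct, Fin.sum_univ_four] at e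
      first | linear_combination e | (rw [← e]; try ring)
    · have e := congrFun h1 3
      simp [mulA12A12, Matrix.mulVec, dotProduct, Fin.sum_univ_four] at e
      first | linear_combination e | (rw [← e]; try ring)
    · have e := congrFun h1 1
      simp [mulA12A12, Matrix.mulVec, dotProduct, Fin.sum_univ_four] at e
      first | linear_combination e | (rw [← e]; try ring)
    · have e := congrFun h2 3
      simp [mulA12A12, Matrix.mulVec, dotProduct, Fin.sum_univ_four] at e
      first | linear_combination e | (rw [← e]; try ring)
  · rintro ⟨h01, h02, h03, h13, h20, h21, h23, h31, h11, h33⟩ x y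
    funext i
    fin_cases i <;>
      simp [mulA12A12, Matrix.mulVec, dotProduct, Fin.sum_univ_four,
        h01, h02, h03, h13, h20, h21, h23, h31, h11, h33] <;> ring
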